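/- Let H > 0, ε > 0, F : ℝ → ℝ, and let ρ, q : ℝ × ℝ → ℝ be differentiable functions with 0 ≤ ρ(t,x) < 1 for all (t,x), satisfying at every point the system ∂t ρ + ∂x q = 0 and ∂t q + (Hq/(1−ρ)) ∂x ρ + (1 − Hq/(1−ρ)) ∂x q = −(1/ε)(q − F(ρ)). Then the function z := Hq/(1−ρ)^H satisfies at every point ∂t z + ∂x z = −(1/ε) · H (q − F(ρ))/(1−ρ)^H. -/

import Mathlib

/-- If (ρ,q) solves the nonlinear discrete-velocity relaxation system, then the
conservative variable z = Hq/(1-ρ)^H satisfies ∂t z + ∂x z = -(1/ε) H (q-F(ρ))/(1-ρ)^H. -/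
theorem stmt4 (H ε : ℝ) (hH : 0 < H) (hε : 0 < ε) (F : ℝ → ℝ)
    (ρ q : ℝ × ℝ → ℝ) (hρ : Differentiable ℝ ρ) (hq : Differentiable ℝ q)
    (hbound : ∀ p, 0 ≤ ρ p ∧ ρ p < 1)
    (h1 : ∀ p, fderiv ℝ ρ p (1, 0) + fderiv ℝ q p (0, 1) = 0)
    (h2 : ∀ p, fderiv ℝ q p (1, 0) + (H * q p / (1 - ρ p)) * fderiv ℝ ρ p (0, 1)
        + (1 - H * q p / (1 - ρ p)) * fderiv ℝ q p (0, 1) = -(1 / ε) * (q p - F (ρ p))) :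
    ∀ p, fderiv ℝ (fun p => H * q p / (1 - ρ p) ^ H) p (1, 0)
       + fderiv ℝ (fun p => H * q p / (1 - ρ p) ^ H) p (0, 1)
       = -(1 / ε) * (H * (q p - F (ρ p)) / (1 - ρ p) ^ H) := by
  have hgpos : ∀ p, (0:ℝ) < 1 - ρ p := fun p => by
    have := (hbound p).2; linarith
  have hfun : (fun p => H * q p / (1 - ρ p) ^ H)
      = fun p => H * q p * (1 - ρ p) ^ (-H) := by
    funext p
    rw [Real.rpow_neg (hgpos p).le, div_eq_mul_inv]
  intro p
  have hg : (0:ℝ) < 1 - ρ p := hgpos p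
  have hρd := (hρ p).hasFDerivAt
  have hqd := (hq p).hasFDerivAt
  have hgd : HasFDerivAt (fun p => 1 - ρ p) ((0:ℝ × ℝ →L[ℝ] ℝ) - fderiv ℝ ρ p) p :=
    (hasFDerivAt_const (1:ℝ) p).sub hρd
  have hpow : HasFDerivAt (fun p => (1 - ρ p) ^ (-H))
      ((-H * (1 - ρ p) ^ (-H - 1)) • ((0:ℝ × ℝ →L[ℝ] ℝ) - fderiv ℝ ρ p)) p :=
    hgd.rpow_const (Or.inl hg.ne')
  have hnum : HasFDerivAt (fun p => H * q p) (H • fderiv ℝ q p) p := hqd.const_mul H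
  have hz : HasFDerivAt (fun p => H * q p * (1 - ρ p) ^ (-H)) _ p := hnum.mul hpow
  rw [hfun, hz.fderiv]
  have hPpos : (0:ℝ) < (1 - ρ p) ^ H := Real.rpow_pos_of_pos hg H
  have hQ : (1 - ρ p) ^ (-H) = ((1 - ρ p) ^ H)⁻¹ := Real.rpow_neg hg.le H
  have hR : (1 - ρ p) ^ (-H - 1) = ((1 - ρ p) ^ H)⁻¹ / (1 - ρ p) := by
    rw [Real.rpow_sub hg, Real.rpow_one, hQ]
  simp only [ContinuousLinearMap.add_apply, ContinuousLinearMap.smul_apply,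
    ContinuousLinearMap.sub_apply, ContinuousLinearMap.zero_apply, smul_eq_mul]
  rw [hQ, hR]
  have e1 := h1 p
  have e2 := h2 p
  set rt := fderiv ℝ ρ p (1, 0)
  set rx := fderiv ℝ ρ p (0, 1)
  set qt := fderiv ℝ q p (1, 0)
  set qx := fderiv ℝ q p (0, 1)
  set P := (1 - ρ p) ^ H with hPdef
  have hgne : (1 - ρ p) ≠ 0 := hg.ne'
  field_simp at e2
  field_simp
  linear_combination (H * q p * ε) * e1 + e2
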